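/- There is no function F from (ℕ → ℕ) to ℝ such that (Monotonicity) whenever f eventually strictly dominates g (i.e., there exists n₀ such that for all n > n₀, f(n) > g(n)), we have F(f) > F(g), and (Nontriviality) for every real r there exists f : ℕ → ℕ with F(f) > r. -/
import Mathlib

theorem no_well_behaved_real_measure :
    ¬ ∃ F : (ℕ → ℕ) → ℝ,
      (∀ f g : ℕ → ℕ, (∃ n₀ : ℕ, ∀ n > n₀, f n > g n) → F f > F g) ∧
      (∀ r : ℝ, ∃ f : ℕ → ℕ, F f > r) := by
  rintro ⟨F, hmono, hnt⟩
  choose f hf using fun k : ℕ => hnt (k : ℝ)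
  set g : ℕ → ℕ := fun n => 1 + (Finset.range (n + 1)).sup (fun k => f k n) with hg
  have key : ∀ k : ℕ, F g > (k : ℝ) := by
    intro k
    refine lt_trans (hf k) (hmono g (f k) ⟨k, fun n hn => ?_⟩)
    have : f k n ≤ (Finset.range (n + 1)).sup (fun j => f j n) :=
      Finset.le_sup (f := fun j => f j n) (Finset.mem_range.mpr (Nat.lt_succ_of_lt hn))
    simpa [hg] using Nat.lt_one_add_iff.mpr this
  obtain ⟨k, hk⟩ := exists_nat_gt (F g)
  exact absurd (key k) (not_lt.mpr hk.le)
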